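/- Fix n ≥ 2 and γ ∈ ℂ with Im(γ) ≠ 0 and |γ| ≠ 1. Define the n×n complex matrix M by M_{ii} = 1, M_{ij} = −𝑖·Im(γ)·(conj γ)^{j−i−1} for i < j, and M_{ij} = 𝑖·Im(γ)·γ^{i−j−1} for i > j, where 𝑖 is the imaginary unit. Let 1 ≤ a < b ≤ n and let C = {a, a+1, …, b}. Then the dimension of the subspace K(M,C) = {v ∈ ℂⁿ : v_j = 0 for all j ∉ C, and (M·v)_i = 0 for all i ∉ C} equals (b − a + 1) − 2 + (1 if a = 1 else 0) + (1 if b = n else 0). -/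

import Mathlib

open scoped ComplexOrder Matrix

/-- The kernel of the off-diagonal block `M^{A'A}`: vectors supported on `A` whose image under
`M` is also supported on `A`. -/
noncomputable def Kspace {n : ℕ} (M : Matrix (Fin n) (Fin n) ℂ) (A : Set (Fin n)) :
    Submodule ℂ (Fin n → ℂ) where
  carrier := {v | (∀ j ∉ A, v j = 0) ∧ ∀ i ∉ A, M.mulVec v i = 0}
  add_mem' := by
    rintro v w ⟨hv1, hv2⟩ ⟨hw1, hw2⟩
    refine ⟨fun j hj => ?_, fun i hi => ?_⟩
    · simp [hv1 j hj, hw1 j hj]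
    · simp [Matrix.mulVec_add, hv2 i hi, hw2 i hi]
  zero_mem' := by
    refine ⟨fun j _ => rfl, fun i _ => ?_⟩
    simp [Matrix.mulVec_zero]
  smul_mem' := by
    rintro c v ⟨hv1, hv2⟩
    refine ⟨fun j hj => ?_, fun i hi => ?_⟩
    · simp [hv1 j hj]
    · simp [Matrix.mulVec_smul, hv2 i hi]

/-- The reduced metric of the PT-symmetric tight-binding chain with impurities `γ, conj γ` at the
two ends of the lattice (farthest impurities, `m = 1`, uniform hopping `t = 1`):
`M i i = 1`, `M i j = -I · Im γ · (conj γ)^(j - i - 1)` for `i < j`, and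
`M i j = I · Im γ · γ^(i - j - 1)` for `i > j`. -/
noncomputable def Mgamma (n : ℕ) (γ : ℂ) : Matrix (Fin n) (Fin n) ℂ :=
  Matrix.of fun i j =>
    if (i : ℕ) = (j : ℕ) then 1
    else if (i : ℕ) < (j : ℕ) then
      -Complex.I * (γ.im : ℂ) * (starRingEnd ℂ γ) ^ ((j : ℕ) - (i : ℕ) - 1)
    else Complex.I * (γ.im : ℂ) * γ ^ ((i : ℕ) - (j : ℕ) - 1)


namespace Stmt18


/-- Submodule of vectors supported on `A`. -/
noncomputable def S0 {n : ℕ} (A : Set (Fin n)) : Submodule ℂ (Fin n → ℂ) where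
  carrier := {v | ∀ j ∉ A, v j = 0}
  add_mem' := fun hv hw j hj => by simp [hv j hj, hw j hj]
  zero_mem' := fun j _ => rfl
  smul_mem' := fun c v hv j hj => by simp [hv j hj]

noncomputable def S0equiv {n : ℕ} (A : Set (Fin n)) [DecidablePred (· ∈ A)] :
    S0 A ≃ₗ[ℂ] (A → ℂ) where
  toFun v := fun j => v.1 j
  map_add' _ _ := rfl
  map_smul' _ _ := rfl
  invFun w := ⟨fun j => if h : j ∈ A then w ⟨j, h⟩ else 0, fun j hj => dif_neg hj⟩
  left_inv v := by
    ext j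
    by_cases h : j ∈ A
    · simp [h]
    · simp [h, v.2 j h]
  right_inv w := by ext j; simp

lemma finrank_S0 {n : ℕ} (a b : Fin n) :
    Module.finrank ℂ (S0 (Set.Icc a b)) = (b : ℕ) + 1 - a := by
  classical
  rw [(S0equiv (Set.Icc a b)).finrank_eq, Module.finrank_fintype_fun_eq_card,
    ← Set.toFinset_card, Set.toFinset_Icc, Fin.card_Icc]

/-- Linear functional `v ↦ ∑ j, w j * v j`. -/
noncomputable def lfun {n : ℕ} (w : Fin n → ℂ) : (Fin n → ℂ) →ₗ[ℂ] ℂ where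
  toFun v := ∑ j, w j * v j
  map_add' v u := by
    simp only [Pi.add_apply, mul_add, Finset.sum_add_distrib]
  map_smul' c v := by
    simp only [Pi.smul_apply, smul_eq_mul, RingHom.id_apply, Finset.mul_sum]
    exact Finset.sum_congr rfl fun j _ => by ring

lemma lfun_single {n : ℕ} (w : Fin n → ℂ) (k : Fin n) :
    lfun w (Pi.single k 1) = w k := by
  simp [lfun, Pi.single_apply, mul_ite, Finset.sum_ite_eq']

noncomputable def fF {n : ℕ} (γ : ℂ) (a : Fin n) : (Fin n → ℂ) →ₗ[ℂ] ℂ :=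
  lfun fun j => (starRingEnd ℂ γ) ^ ((j : ℕ) - (a : ℕ))

noncomputable def gF {n : ℕ} (γ : ℂ) (b : Fin n) : (Fin n → ℂ) →ₗ[ℂ] ℂ :=
  lfun fun j => γ ^ ((b : ℕ) - (j : ℕ))


variable {n : ℕ}

lemma mulVec_lt (γ : ℂ) (a b : Fin n) (v : Fin n → ℂ)
    (hv : ∀ j ∉ Set.Icc a b, v j = 0) (i : Fin n) (hi : (i : ℕ) < (a : ℕ)) :
    (Mgamma n γ).mulVec v i
      = -Complex.I * γ.im * (starRingEnd ℂ γ) ^ ((a : ℕ) - (i : ℕ) - 1) * fF γ a v := by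
  unfold Matrix.mulVec dotProduct fF lfun Mgamma
  simp only [Matrix.of_apply, LinearMap.coe_mk, AddHom.coe_mk, Finset.mul_sum]
  refine Finset.sum_congr rfl fun j _ => ?_
  by_cases hj : j ∈ Set.Icc a b
  · have h1 : (a : ℕ) ≤ (j : ℕ) := hj.1
    have hne : ¬ (i : ℕ) = (j : ℕ) := by omega
    have hlt : (i : ℕ) < (j : ℕ) := by omega
    rw [if_neg hne, if_pos hlt]
    have : (j : ℕ) - (i : ℕ) - 1 = ((a : ℕ) - (i : ℕ) - 1) + ((j : ℕ) - (a : ℕ)) := by omega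
    rw [this, pow_add]; ring
  · rw [hv j hj]; ring

lemma mulVec_gt (γ : ℂ) (a b : Fin n) (v : Fin n → ℂ)
    (hv : ∀ j ∉ Set.Icc a b, v j = 0) (i : Fin n) (hi : (b : ℕ) < (i : ℕ)) :
    (Mgamma n γ).mulVec v i
      = Complex.I * γ.im * γ ^ ((i : ℕ) - (b : ℕ) - 1) * gF γ b v := by
  unfold Matrix.mulVec dotProduct gF lfun Mgamma
  simp only [Matrix.of_apply, LinearMap.coe_mk, AddHom.coe_mk, Finset.mul_sum]
  refine Finset.sum_congr rfl fun j _ => ?_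
  by_cases hj : j ∈ Set.Icc a b
  · have h1 : (j : ℕ) ≤ (b : ℕ) := hj.2
    have hne : ¬ (i : ℕ) = (j : ℕ) := by omega
    have hlt : ¬ (i : ℕ) < (j : ℕ) := by omega
    rw [if_neg hne, if_neg hlt]
    have : (i : ℕ) - (j : ℕ) - 1 = ((i : ℕ) - (b : ℕ) - 1) + ((b : ℕ) - (j : ℕ)) := by omega
    rw [this, pow_add]; ring
  · rw [hv j hj]; ring

lemma coeff_ne (γ : ℂ) (hγ : γ.im ≠ 0) : -Complex.I * (γ.im : ℂ) ≠ 0 := by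
  simp [Complex.I_ne_zero, Complex.ofReal_ne_zero, hγ]

lemma mem_K_iff (γ : ℂ) (hγ : γ.im ≠ 0) (a b : Fin n) (hab : a ≤ b) (v : Fin n → ℂ) :
    v ∈ Kspace (Mgamma n γ) (Set.Icc a b) ↔
      v ∈ S0 (Set.Icc a b) ∧ ((a : ℕ) = 0 ∨ fF γ a v = 0)
        ∧ ((b : ℕ) = n - 1 ∨ gF γ b v = 0) := by
  constructor
  · rintro ⟨hv1, hv2⟩
    refine ⟨hv1, ?_, ?_⟩
    · by_cases ha : (a : ℕ) = 0
      · exact Or.inl ha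
      · refine Or.inr ?_
        have hlt : (a : ℕ) - 1 < n := by omega
        set i : Fin n := ⟨(a : ℕ) - 1, hlt⟩ with hidef
        have hmem : i ∉ Set.Icc a b := by
          simp only [Set.mem_Icc, not_and, not_le]
          intro h
          exfalso
          have := Fin.le_def.mp h
          simp only [hidef] at this
          omega
        have h0 := hv2 i hmem
        rw [mulVec_lt γ a b v hv1 i (by simp [hidef]; omega)] at h0
        have he : (a : ℕ) - (i : ℕ) - 1 = 0 := by simp [hidef]; omega
        rw [he, pow_zero, mul_one] at h0
        exact (mul_eq_zero.mp h0).resolve_left (coeff_ne γ hγ)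
    · by_cases hb : (b : ℕ) = n - 1
      · exact Or.inl hb
      · refine Or.inr ?_
        have hlt : (b : ℕ) + 1 < n := by have := b.isLt; omega
        set i : Fin n := ⟨(b : ℕ) + 1, hlt⟩ with hidef
        have hmem : i ∉ Set.Icc a b := by
          simp only [Set.mem_Icc, not_and, not_le]
          intro h
          rw [Fin.lt_def]
          simp [hidef]
        have h0 := hv2 i hmem
        rw [mulVec_gt γ a b v hv1 i (by simp [hidef])] at h0
        have he : (i : ℕ) - (b : ℕ) - 1 = 0 := by simp [hidef]
        rw [he, pow_zero, mul_one] at h0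
        have hI : Complex.I * (γ.im : ℂ) ≠ 0 := by
          simp [Complex.I_ne_zero, Complex.ofReal_ne_zero, hγ]
        exact (mul_eq_zero.mp h0).resolve_left hI
  · rintro ⟨hv1, hf, hg⟩
    refine ⟨hv1, fun i hi => ?_⟩
    have hi' : (i : ℕ) < (a : ℕ) ∨ (b : ℕ) < (i : ℕ) := by
      by_contra h
      push_neg at h
      exact hi ⟨Fin.le_def.mpr (by omega), Fin.le_def.mpr (by omega)⟩
    rcases hi' with h | h
    · rw [mulVec_lt γ a b v hv1 i h]
      rcases hf with hf | hf
      · omega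
      · rw [hf]; ring
    · rw [mulVec_gt γ a b v hv1 i h]
      rcases hg with hg | hg
      · exfalso; have := i.isLt; omega
      · rw [hg]; ring

lemma single_mem (a b k : Fin n) (hk : k ∈ Set.Icc a b) :
    (Pi.single k 1 : Fin n → ℂ) ∈ S0 (Set.Icc a b) :=
  fun j hj => Pi.single_eq_of_ne (fun h => hj (by rw [h]; exact hk)) 1

lemma fF_single (γ : ℂ) (a k : Fin n) :
    fF γ a (Pi.single k 1) = (starRingEnd ℂ γ) ^ ((k : ℕ) - (a : ℕ)) :=
  lfun_single _ _

lemma gF_single (γ : ℂ) (b k : Fin n) :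
    gF γ b (Pi.single k 1) = γ ^ ((b : ℕ) - (k : ℕ)) :=
  lfun_single _ _

lemma dne (γ : ℂ) (hγ1 : ‖γ‖ ≠ 1) (p : ℕ) (hp : p ≠ 0) :
    (1 : ℂ) - γ ^ p * (starRingEnd ℂ γ) ^ p ≠ 0 := by
  rw [sub_ne_zero]
  intro h
  rw [← mul_pow, Complex.mul_conj, ← Complex.ofReal_pow] at h
  have h2 : Complex.normSq γ ^ p = 1 := Complex.ofReal_eq_one.mp h.symm
  rw [← Complex.sq_norm, ← pow_mul] at h2
  rcases lt_or_gt_of_ne hγ1 with hl | hl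
  · have := pow_lt_one₀ (by positivity) hl (by omega : 2 * p ≠ 0)
    exact absurd h2 (ne_of_lt this)
  · have := one_lt_pow₀ hl (by omega : 2 * p ≠ 0)
    exact absurd h2.symm (ne_of_lt this)

end Stmt18

/-- For `n ≥ 2`, `Im γ ≠ 0` and `|γ| ≠ 1`, and a connected interval
`C = {a, …, b}` with `a < b` (1-indexed: `1 ≤ a < b ≤ n`), the kernel `K(M, C)` of the
off-diagonal block of the reduced metric has dimension
`|C| - 2 + [a = 1] + [b = n]`. -/
theorem stmt_18 (n : ℕ) (hn : 2 ≤ n) (γ : ℂ) (hγ : γ.im ≠ 0)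
    (hγ1 : ‖γ‖ ≠ 1) (a b : Fin n) (hab : a < b) :
    Module.finrank ℂ (Kspace (Mgamma n γ) (Set.Icc a b)) =
      ((b : ℕ) - (a : ℕ) + 1) - 2
        + (if (a : ℕ) = 0 then 1 else 0)
        + (if (b : ℕ) = n - 1 then 1 else 0) := by
  classical
  have hab' : (a : ℕ) < (b : ℕ) := hab
  have hbn : (b : ℕ) < n := b.isLt
  have habl : a ≤ b := le_of_lt hab
  by_cases ha : (a : ℕ) = 0 <;> by_cases hb : (b : ℕ) = n - 1
  · -- a = 0, b = n-1 : no conditions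
    have hK : Kspace (Mgamma n γ) (Set.Icc a b) = Stmt18.S0 (Set.Icc a b) := by
      ext v
      rw [Stmt18.mem_K_iff γ hγ a b habl]
      simp [ha, hb]
    rw [hK, Stmt18.finrank_S0, if_pos ha, if_pos hb]
    omega
  · -- a = 0, b ≠ n-1 : only the g condition
    set ψ := (Stmt18.gF γ b).comp (Stmt18.S0 (Set.Icc a b)).subtype with hψ
    have hK : Kspace (Mgamma n γ) (Set.Icc a b)
        = Submodule.map (Stmt18.S0 (Set.Icc a b)).subtype (LinearMap.ker ψ) := by
      ext v
      rw [Stmt18.mem_K_iff γ hγ a b habl, Submodule.mem_map]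
      constructor
      · rintro ⟨hS, -, hg⟩
        exact ⟨⟨v, hS⟩, by simpa [hψ, LinearMap.mem_ker] using hg.resolve_left hb, rfl⟩
      · rintro ⟨⟨v', hS⟩, hker, rfl⟩
        exact ⟨hS, Or.inl ha, Or.inr (by simpa [hψ, LinearMap.mem_ker] using hker)⟩
    have hsurj : Function.Surjective ψ := by
      intro x
      refine ⟨x • ⟨Pi.single b 1, Stmt18.single_mem a b b ⟨habl, le_refl b⟩⟩, ?_⟩
      simp [hψ, Stmt18.gF_single]
    have hrn := LinearMap.finrank_range_add_finrank_ker ψ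
    rw [LinearMap.range_eq_top.mpr hsurj, finrank_top, Module.finrank_self,
      Stmt18.finrank_S0] at hrn
    rw [hK, Submodule.finrank_map_subtype_eq, if_pos ha, if_neg hb]
    omega
  · -- a ≠ 0, b = n-1 : only the f condition
    set ψ := (Stmt18.fF γ a).comp (Stmt18.S0 (Set.Icc a b)).subtype with hψ
    have hK : Kspace (Mgamma n γ) (Set.Icc a b)
        = Submodule.map (Stmt18.S0 (Set.Icc a b)).subtype (LinearMap.ker ψ) := by
      ext v
      rw [Stmt18.mem_K_iff γ hγ a b habl, Submodule.mem_map]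
      constructor
      · rintro ⟨hS, hf, -⟩
        exact ⟨⟨v, hS⟩, by simpa [hψ, LinearMap.mem_ker] using hf.resolve_left ha, rfl⟩
      · rintro ⟨⟨v', hS⟩, hker, rfl⟩
        exact ⟨hS, Or.inr (by simpa [hψ, LinearMap.mem_ker] using hker), Or.inl hb⟩
    have hsurj : Function.Surjective ψ := by
      intro x
      refine ⟨x • ⟨Pi.single a 1, Stmt18.single_mem a b a ⟨le_refl a, habl⟩⟩, ?_⟩
      simp [hψ, Stmt18.fF_single]
    have hrn := LinearMap.finrank_range_add_finrank_ker ψ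
    rw [LinearMap.range_eq_top.mpr hsurj, finrank_top, Module.finrank_self,
      Stmt18.finrank_S0] at hrn
    rw [hK, Submodule.finrank_map_subtype_eq, if_neg ha, if_pos hb]
    omega
  · -- a ≠ 0, b ≠ n-1 : both conditions
    set φ := ((Stmt18.fF γ a).comp (Stmt18.S0 (Set.Icc a b)).subtype).prod
      ((Stmt18.gF γ b).comp (Stmt18.S0 (Set.Icc a b)).subtype) with hφ
    have hK : Kspace (Mgamma n γ) (Set.Icc a b)
        = Submodule.map (Stmt18.S0 (Set.Icc a b)).subtype (LinearMap.ker φ) := by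
      ext v
      rw [Stmt18.mem_K_iff γ hγ a b habl, Submodule.mem_map]
      constructor
      · rintro ⟨hS, hf, hg⟩
        refine ⟨⟨v, hS⟩, ?_, rfl⟩
        simp [hφ, LinearMap.mem_ker, LinearMap.prod_apply, Prod.ext_iff,
          hf.resolve_left ha, hg.resolve_left hb]
      · rintro ⟨⟨v', hS⟩, hker, rfl⟩
        simp only [hφ, LinearMap.mem_ker, LinearMap.prod_apply, LinearMap.comp_apply,
          Submodule.coe_subtype, Function.prod, Prod.mk_eq_zero] at hker
        exact ⟨hS, Or.inr hker.1, Or.inr hker.2⟩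
    have hd : (1 : ℂ) - γ ^ ((b:ℕ) - (a:ℕ)) * (starRingEnd ℂ γ) ^ ((b:ℕ) - (a:ℕ)) ≠ 0 :=
      Stmt18.dne γ hγ1 _ (by omega)
    have hsurj : Function.Surjective φ := by
      rintro ⟨x, y⟩
      set d := (1 : ℂ) - γ ^ ((b:ℕ) - (a:ℕ)) * (starRingEnd ℂ γ) ^ ((b:ℕ) - (a:ℕ)) with hddef
      set α := (x - (starRingEnd ℂ γ) ^ ((b:ℕ) - (a:ℕ)) * y) / d with hα
      set β := (y - γ ^ ((b:ℕ) - (a:ℕ)) * x) / d with hβ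
      refine ⟨α • ⟨Pi.single a 1, Stmt18.single_mem a b a ⟨le_refl a, habl⟩⟩
            + β • ⟨Pi.single b 1, Stmt18.single_mem a b b ⟨habl, le_refl b⟩⟩, ?_⟩
      have h1 : (a : ℕ) - (a : ℕ) = 0 := by omega
      have h2 : (b : ℕ) - (b : ℕ) = 0 := by omega
      have e1 : (Stmt18.fF γ a) (α • (Pi.single a 1 : Fin n → ℂ) + β • (Pi.single b 1 : Fin n → ℂ)) = x := by
        rw [map_add, map_smul, map_smul, Stmt18.fF_single, Stmt18.fF_single, h1, pow_zero]
        rw [smul_eq_mul, smul_eq_mul, hα, hβ]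
        field_simp
        ring
      have e2 : (Stmt18.gF γ b) (α • (Pi.single a 1 : Fin n → ℂ) + β • (Pi.single b 1 : Fin n → ℂ)) = y := by
        rw [map_add, map_smul, map_smul, Stmt18.gF_single, Stmt18.gF_single, h2, pow_zero]
        rw [smul_eq_mul, smul_eq_mul, hα, hβ]
        field_simp
        ring
      exact Prod.ext e1 e2
    have hrn := LinearMap.finrank_range_add_finrank_ker φ
    rw [LinearMap.range_eq_top.mpr hsurj, finrank_top, Module.finrank_prod,
      Module.finrank_self, Stmt18.finrank_S0] at hrn
    rw [hK, Submodule.finrank_map_subtype_eq, if_neg ha, if_neg hb]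
    omega
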